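/- For every integer b ≥ 2 and positive integer n, n divides φ((b^n − 1)/(b − 1)), the Euler totient of the base-b repunit of length n. -/
import Mathlib

theorem totient_repunit (b n : ℕ) (hb : 2 ≤ b) (hn : 0 < n) :
    n ∣ Nat.totient ((b ^ n - 1) / (b - 1)) := by
  set R := (b ^ n - 1) / (b - 1) with hR
  have hdvd : (b - 1) ∣ (b ^ n - 1) := by
    simpa using Nat.sub_dvd_pow_sub_pow b 1 n
  have hRmul : R * (b - 1) = b ^ n - 1 := Nat.div_mul_cancel hdvd
  have hRge : b ^ (n - 1) ≤ R := by
    have hbn : b ^ n = b ^ (n - 1) * b := by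
      rw [← pow_succ]; congr 1; omega
    have h1 : b ^ (n - 1) * (b - 1) ≤ b ^ n - 1 := by
      have hp : 1 ≤ b ^ (n - 1) := Nat.one_le_pow _ _ (by omega)
      have he : b ^ (n - 1) * (b - 1) = b ^ (n - 1) * b - b ^ (n - 1) := by
        rw [Nat.mul_sub, mul_one]
      omega
    exact (Nat.le_div_iff_mul_le (by omega : 0 < b - 1)).mpr h1
  have hRpos : 0 < R := lt_of_lt_of_le (Nat.one_le_pow _ _ (by omega)) hRge
  haveI : NeZero R := ⟨by omega⟩
  have hRdvd : R ∣ b ^ n - 1 := hRmul ▸ Dvd.intro _ rfl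
  have hmod : (b : ZMod R) ^ n = 1 := by
    have h : b ^ n ≡ 1 [MOD R] :=
      ((Nat.modEq_iff_dvd' (Nat.one_le_pow _ _ (by omega))).mpr hRdvd).symm
    have := (ZMod.natCast_eq_natCast_iff _ _ _).mpr h
    push_cast at this
    exact this
  have horder : orderOf (b : ZMod R) = n := by
    have hdvdn : orderOf (b : ZMod R) ∣ n := orderOf_dvd_of_pow_eq_one hmod
    have hd_le : orderOf (b : ZMod R) ≤ n := Nat.le_of_dvd hn hdvdn
    rcases lt_or_eq_of_le hd_le with hlt | heq
    · exfalso
      set d := orderOf (b : ZMod R) with hd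
      have hdpos : 0 < d := by
        refine orderOf_pos_iff.mpr ?_
        exact isOfFinOrder_iff_pow_eq_one.mpr ⟨n, hn, hmod⟩
      have hpow : (b : ZMod R) ^ d = 1 := pow_orderOf_eq_one _
      have hmd : b ^ d ≡ 1 [MOD R] := by
        have : ((b ^ d : ℕ) : ZMod R) = ((1 : ℕ) : ZMod R) := by push_cast; exact hpow
        exact (ZMod.natCast_eq_natCast_iff _ _ _).mp this
      have hRd : R ∣ b ^ d - 1 :=
        (Nat.modEq_iff_dvd' (Nat.one_le_pow _ _ (by omega))).mp hmd.symm
      have hpos : 0 < b ^ d - 1 := by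
        have : 2 ≤ b ^ d := le_trans hb (Nat.le_self_pow (by omega) b)
        omega
      have hle : R ≤ b ^ d - 1 := Nat.le_of_dvd hpos hRd
      have : b ^ d ≤ b ^ (n - 1) := Nat.pow_le_pow_right (by omega) (by omega)
      omega
    · exact heq
  have hu : IsUnit (b : ZMod R) := by
    exact IsUnit.of_pow_eq_one hmod (by omega)
  have ht : (b : ZMod R) ^ R.totient = 1 := by
    have h := congrArg (Units.val) (ZMod.pow_totient hu.unit)
    rw [Units.val_pow_eq_pow_val, Units.val_one, hu.unit_spec] at h
    exact h
  rw [← horder]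
  exact orderOf_dvd_of_pow_eq_one ht
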